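/- Fix positive integers n₁,...,n_m, positive reals p₁,...,p_m, and nonzero reals q₁,...,q_m. Define E(Y) = Σᵢ nᵢqᵢ²Yᵢ² and Fᵢ(Y) = 2pᵢYᵢ − qᵢ²Yᵢ² − E(Y) for Y ∈ ℝ^m. Then there is exactly one point ξ ∈ ℝ^m with ξᵢ > 0 for all i and Fᵢ(ξ) = 0 for all i. -/

import Mathlib

open BigOperators

set_option maxHeartbeats 1000000

/-- E(Y) = Σᵢ nᵢ qᵢ² Yᵢ². -/
def flowE (m : ℕ) (n : Fin m → ℕ) (q : Fin m → ℝ) (Y : Fin m → ℝ) : ℝ :=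
  ∑ j, (n j : ℝ) * q j ^ 2 * Y j ^ 2

/-- Fᵢ(Y) = 2pᵢYᵢ − qᵢ²Yᵢ² − E(Y). -/
def flowF (m : ℕ) (n : Fin m → ℕ) (p q : Fin m → ℝ) (i : Fin m) (Y : Fin m → ℝ) : ℝ :=
  2 * p i * Y i - q i ^ 2 * Y i ^ 2 - flowE m n q Y

/-- sᵢ(c) = √(pᵢ² − qᵢ²c). -/
noncomputable def auxS (m : ℕ) (p q : Fin m → ℝ) (i : Fin m) (c : ℝ) : ℝ :=
  Real.sqrt (p i ^ 2 - q i ^ 2 * c)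

/-- The consistency function φ(c). -/
noncomputable def auxPhi (m : ℕ) (n : Fin m → ℕ) (p q : Fin m → ℝ) (c : ℝ) : ℝ :=
  (∑ i, 2 * (n i : ℝ) * p i * (p i - auxS m p q i c) / q i ^ 2)
    - ((∑ i, (n i : ℝ)) + 1) * c

lemma auxq2 {m : ℕ} (q : Fin m → ℝ) (hq : ∀ i, q i ≠ 0) (i : Fin m) : 0 < q i ^ 2 := by
  have := hq i
  positivity

/-- Any positive solution of F = 0 is of the explicit "minus root" form. -/
lemma sol_char (m : ℕ) (n : Fin m → ℕ) (p q : Fin m → ℝ)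
    (hm : 0 < m)
    (hn : ∀ i, 0 < n i) (hp : ∀ i, 0 < p i) (hq : ∀ i, q i ≠ 0)
    (Y : Fin m → ℝ) (hY : ∀ i, 0 < Y i) (hF : ∀ i, flowF m n p q i Y = 0) :
    0 < flowE m n q Y ∧ (∀ i, q i ^ 2 * flowE m n q Y ≤ p i ^ 2)
      ∧ (∀ i, Y i = (p i - auxS m p q i (flowE m n q Y)) / q i ^ 2)
      ∧ auxPhi m n p q (flowE m n q Y) = 0 := by
  have : Nonempty (Fin m) := Fin.pos_iff_nonempty.mp hm
  set c := flowE m n q Y with hcdef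
  have hq2 := auxq2 q hq
  have key : ∀ i, q i ^ 2 * Y i ^ 2 = 2 * p i * Y i - c := by
    intro i
    have := hF i
    unfold flowF at this
    linarith
  have hterm : ∀ i, 0 < (n i : ℝ) * q i ^ 2 * Y i ^ 2 := by
    intro i
    have h1 : (0:ℝ) < n i := by exact_mod_cast hn i
    have h2 := hq2 i
    have h3 := hY i
    positivity
  have hc0 : 0 < c := by
    rw [hcdef]
    exact Finset.sum_pos (fun i _ => hterm i) Finset.univ_nonempty
  have hle : ∀ i, q i ^ 2 * Y i ≤ p i := by
    intro i
    by_contra h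
    push_neg at h
    have hn1 : (1:ℝ) ≤ n i := by exact_mod_cast hn i
    have h1 : (n i : ℝ) * q i ^ 2 * Y i ^ 2 ≤ c := by
      rw [hcdef]
      exact Finset.single_le_sum (f := fun j => (n j : ℝ) * q j ^ 2 * Y j ^ 2)
        (fun j _ => (hterm j).le) (Finset.mem_univ i)
    have h2 : q i ^ 2 * Y i ^ 2 ≤ c := by nlinarith [hterm i, sq_nonneg (Y i)]
    have h3 : p i * Y i < q i ^ 2 * Y i ^ 2 := by nlinarith [hY i]
    have h4 : c < p i * Y i := by nlinarith [key i]
    linarith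
  have hdisc : ∀ i, q i ^ 2 * c ≤ p i ^ 2 := by
    intro i
    nlinarith [sq_nonneg (p i - q i ^ 2 * Y i), key i, hq2 i]
  have hform : ∀ i, Y i = (p i - auxS m p q i c) / q i ^ 2 := by
    intro i
    have h5 : p i ^ 2 - q i ^ 2 * c = (p i - q i ^ 2 * Y i) ^ 2 := by
      nlinarith [key i]
    have h6 : auxS m p q i c = p i - q i ^ 2 * Y i := by
      unfold auxS
      rw [h5]
      exact Real.sqrt_sq (by linarith [hle i])
    rw [h6, sub_sub_cancel, mul_comm (q i ^ 2) (Y i),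
      mul_div_cancel_right₀ _ (ne_of_gt (hq2 i))]
  have hphi : auxPhi m n p q c = 0 := by
    unfold auxPhi
    have h7 : ∀ i ∈ Finset.univ, 2 * (n i : ℝ) * p i * (p i - auxS m p q i c) / q i ^ 2
        = (n i : ℝ) * q i ^ 2 * Y i ^ 2 + (n i : ℝ) * c := by
      intro i _
      have h6 : p i - auxS m p q i c = q i ^ 2 * Y i := by
        rw [hform i, mul_div_assoc', mul_comm (q i ^ 2) _,
          mul_div_cancel_right₀ _ (ne_of_gt (hq2 i))]
      rw [h6]
      have h6' : 2 * (n i : ℝ) * p i * (q i ^ 2 * Y i) / q i ^ 2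
          = 2 * (n i : ℝ) * p i * Y i := by
        rw [mul_div_assoc, mul_comm (q i ^ 2) (Y i),
          mul_div_cancel_right₀ _ (ne_of_gt (hq2 i))]
      rw [h6']
      linear_combination (-(n i : ℝ)) * key i
    rw [Finset.sum_congr rfl h7, Finset.sum_add_distrib, ← Finset.sum_mul]
    have hEc : (∑ i, (n i : ℝ) * q i ^ 2 * Y i ^ 2) = c := by rw [hcdef]; rfl
    rw [hEc]
    ring
  exact ⟨hc0, hdisc, hform, hphi⟩

/-- Strict convexity of φ: if 0 < c < d then φ(c) < (c/d)·φ(d). -/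
lemma phi_lt (m : ℕ) (n : Fin m → ℕ) (p q : Fin m → ℝ)
    (hm : 0 < m) (hn : ∀ i, 0 < n i) (hp : ∀ i, 0 < p i) (hq : ∀ i, q i ≠ 0)
    {c d : ℝ} (hc : 0 < c) (hcd : c < d) (hd : ∀ i, q i ^ 2 * d ≤ p i ^ 2) :
    auxPhi m n p q c < (c / d) * auxPhi m n p q d := by
  have : Nonempty (Fin m) := Fin.pos_iff_nonempty.mp hm
  have hq2 := auxq2 q hq
  have hd0 : 0 < d := hc.trans hcd
  set t := c / d with htdef
  have ht0 : 0 < t := div_pos hc hd0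
  have ht1 : t < 1 := (div_lt_one hd0).mpr hcd
  have htd : t * d = c := by
    rw [htdef]; exact div_mul_cancel₀ c (ne_of_gt hd0)
  clear_value t
  have hkey : ∀ i, p i - auxS m p q i c < t * (p i - auxS m p q i d) := by
    intro i
    have hb0 : 0 ≤ auxS m p q i d := Real.sqrt_nonneg _
    have hb2 : (auxS m p q i d) ^ 2 = p i ^ 2 - q i ^ 2 * d :=
      Real.sq_sqrt (by linarith [hd i])
    have hbp : auxS m p q i d < p i := by
      nlinarith [hq2 i, hp i, mul_pos (hq2 i) hd0]
    have hiden : p i ^ 2 - q i ^ 2 * c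
        = ((1 - t) * p i + t * auxS m p q i d) ^ 2
          + t * (1 - t) * (p i - auxS m p q i d) ^ 2 := by
      have hqc : q i ^ 2 * c = t * (q i ^ 2 * d) := by rw [← htd]; ring
      rw [hqc]
      linear_combination (-t) * hb2
    have hlt : (1 - t) * p i + t * auxS m p q i d < auxS m p q i c := by
      have hnn : 0 ≤ (1 - t) * p i + t * auxS m p q i d := by
        have := hp i
        nlinarith
      have hSc : auxS m p q i c = Real.sqrt (p i ^ 2 - q i ^ 2 * c) := rfl
      rw [hSc, Real.lt_sqrt hnn, hiden]
      nlinarith [mul_pos (mul_pos ht0 (by linarith : (0:ℝ) < 1 - t))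
        (pow_pos (sub_pos.mpr hbp) 2)]
    linarith
  have hsum : (∑ i, 2 * (n i : ℝ) * p i * (p i - auxS m p q i c) / q i ^ 2)
      < ∑ i, t * (2 * (n i : ℝ) * p i * (p i - auxS m p q i d) / q i ^ 2) := by
    apply Finset.sum_lt_sum_of_nonempty Finset.univ_nonempty
    intro i _
    have hn1 : (1:ℝ) ≤ n i := by exact_mod_cast hn i
    have hA : 0 < 2 * (n i : ℝ) * p i := by nlinarith [hp i]
    rw [← mul_div_assoc, div_lt_div_iff_of_pos_right (hq2 i)]
    nlinarith [mul_lt_mul_of_pos_left (hkey i) hA]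
  rw [← Finset.mul_sum] at hsum
  unfold auxPhi
  have h9 : t * (((∑ i, (n i : ℝ)) + 1) * d) = ((∑ i, (n i : ℝ)) + 1) * c := by
    rw [← htd]; ring
  linarith [hsum, h9]

/-- Existence of a root of φ in (0, cmax]. -/
lemma phi_exists_root (m : ℕ) (n : Fin m → ℕ) (p q : Fin m → ℝ)
    (hm : 0 < m) (hn : ∀ i, 0 < n i) (hp : ∀ i, 0 < p i) (hq : ∀ i, q i ≠ 0) :
    ∃ c : ℝ, 0 < c ∧ (∀ i, q i ^ 2 * c ≤ p i ^ 2) ∧ auxPhi m n p q c = 0 := by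
  have hne : Nonempty (Fin m) := Fin.pos_iff_nonempty.mp hm
  have hq2 := auxq2 q hq
  set N : ℝ := ∑ i, (n i : ℝ) with hN
  clear_value N
  have hN1 : 1 ≤ N := by
    obtain ⟨i0⟩ := hne
    have h1 : (1:ℝ) ≤ (n i0 : ℝ) := by exact_mod_cast hn i0
    have h2 : (n i0 : ℝ) ≤ N := by
      rw [hN]
      exact Finset.single_le_sum (f := fun j => (n j : ℝ))
        (fun j _ => by positivity) (Finset.mem_univ i0)
    linarith
  set cmax := Finset.univ.inf' Finset.univ_nonempty (fun i => p i ^ 2 / q i ^ 2) with hcm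
  have hcmax_le : ∀ i, q i ^ 2 * cmax ≤ p i ^ 2 := by
    intro i
    have h1 : cmax ≤ p i ^ 2 / q i ^ 2 :=
      Finset.inf'_le (f := fun i => p i ^ 2 / q i ^ 2) (Finset.mem_univ i)
    rw [mul_comm, ← le_div_iff₀ (hq2 i)]
    exact h1
  have hcmax_pos : 0 < cmax := by
    rw [hcm]
    rw [Finset.lt_inf'_iff]
    intro i _
    exact div_pos (pow_pos (hp i) 2) (hq2 i)
  obtain ⟨i0, _, hi0⟩ := Finset.exists_mem_eq_inf'
    (Finset.univ_nonempty (α := Fin m)) (fun i => p i ^ 2 / q i ^ 2)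
  rw [← hcm] at hi0
  clear_value cmax
  have hphimax : 0 ≤ auxPhi m n p q cmax := by
    have hkey1 : ∀ i, (n i : ℝ) * cmax
        ≤ 2 * (n i : ℝ) * p i * (p i - auxS m p q i cmax) / q i ^ 2 := by
      intro i
      have hS0 : 0 ≤ auxS m p q i cmax := Real.sqrt_nonneg _
      have hS2 : (auxS m p q i cmax) ^ 2 = p i ^ 2 - q i ^ 2 * cmax :=
        Real.sq_sqrt (by linarith [hcmax_le i])
      have hSp : auxS m p q i cmax ≤ p i := by nlinarith [hp i]
      have h2 : q i ^ 2 * cmax ≤ 2 * p i * (p i - auxS m p q i cmax) := by nlinarith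
      rw [le_div_iff₀ (hq2 i)]
      have hn0 : (0:ℝ) ≤ n i := by positivity
      nlinarith [mul_le_mul_of_nonneg_left h2 hn0]
    have hS00 : auxS m p q i0 cmax = 0 := by
      unfold auxS
      rw [show p i0 ^ 2 - q i0 ^ 2 * cmax = 0 by
        have hq0 := ne_of_gt (hq2 i0)
        rw [hi0]; field_simp; simp [hq i0]]
      exact Real.sqrt_zero
    have hkey2 : cmax
        ≤ 2 * (n i0 : ℝ) * p i0 * (p i0 - auxS m p q i0 cmax) / q i0 ^ 2
          - (n i0 : ℝ) * cmax := by
      rw [hS00, sub_zero]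
      have h1 : 2 * (n i0 : ℝ) * p i0 * p i0 / q i0 ^ 2
          = 2 * (n i0 : ℝ) * (p i0 ^ 2 / q i0 ^ 2) := by ring
      rw [h1, ← hi0]
      have hn1 : (1:ℝ) ≤ n i0 := by exact_mod_cast hn i0
      nlinarith [hcmax_pos]
    have h3 : cmax ≤ ∑ i, (2 * (n i : ℝ) * p i * (p i - auxS m p q i cmax) / q i ^ 2
        - (n i : ℝ) * cmax) :=
      le_trans hkey2 (Finset.single_le_sum
        (f := fun i => 2 * (n i : ℝ) * p i * (p i - auxS m p q i cmax) / q i ^ 2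
          - (n i : ℝ) * cmax)
        (fun i _ => sub_nonneg.mpr (hkey1 i)) (Finset.mem_univ i0))
    rw [Finset.sum_sub_distrib, ← Finset.sum_mul, ← hN] at h3
    unfold auxPhi
    rw [← hN]
    linarith [h3]
  set c0 := cmax / (N + 1) with hc0def
  clear_value c0
  have hNpos : (0:ℝ) < N + 1 := by linarith
  have hc0pos : 0 < c0 := by rw [hc0def]; exact div_pos hcmax_pos hNpos
  have hc0cm : c0 * (N + 1) = cmax := by
    rw [hc0def]; exact div_mul_cancel₀ cmax (ne_of_gt hNpos)
  have hc0le : c0 ≤ cmax := by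
    rw [hc0def, div_le_iff₀ hNpos]
    nlinarith [hcmax_pos]
  have hphic0 : auxPhi m n p q c0 < 0 := by
    have hkey : ∀ i, (2 * N + 1) * (2 * (n i : ℝ) * p i * (p i - auxS m p q i c0) / q i ^ 2)
        ≤ (n i : ℝ) * (2 * (N + 1) * c0) := by
      intro i
      have hq2c0 : q i ^ 2 * c0 ≤ p i ^ 2 :=
        le_trans (mul_le_mul_of_nonneg_left hc0le (le_of_lt (hq2 i))) (hcmax_le i)
      have hS0 : 0 ≤ auxS m p q i c0 := Real.sqrt_nonneg _
      have hS2 : (auxS m p q i c0) ^ 2 = p i ^ 2 - q i ^ 2 * c0 :=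
        Real.sq_sqrt (by linarith)
      have hSp : auxS m p q i c0 ≤ p i := by nlinarith [hp i]
      have hq2c0' : (N + 1) * (q i ^ 2 * c0) ≤ p i ^ 2 := by
        have h' : (N + 1) * (q i ^ 2 * c0) = q i ^ 2 * cmax := by
          rw [← hc0cm]; ring
        rw [h']
        exact hcmax_le i
      have hNS : N * p i ≤ (N + 1) * auxS m p q i c0 := by
        have hS2' : ((N + 1) * auxS m p q i c0) ^ 2
            = (N + 1) ^ 2 * p i ^ 2 - (N + 1) * ((N + 1) * (q i ^ 2 * c0)) := by
          linear_combination (N + 1) ^ 2 * hS2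
        have h1 : (N * p i) ^ 2 ≤ ((N + 1) * auxS m p q i c0) ^ 2 := by
          nlinarith [mul_le_mul_of_nonneg_left hq2c0' (by linarith : (0:ℝ) ≤ N + 1),
            sq_nonneg (p i), hp i, hN1]
        nlinarith [h1, hS0, hp i, hN1]
      have hprod : (2 * N + 1) * (p i * (p i - auxS m p q i c0))
          ≤ (N + 1) * (q i ^ 2 * c0) := by
        have h2 : ((2 * N + 1) * p i) * (p i - auxS m p q i c0)
            ≤ ((N + 1) * (p i + auxS m p q i c0)) * (p i - auxS m p q i c0) := by
          apply mul_le_mul_of_nonneg_right _ (by linarith [hSp])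
          linarith [hNS]
        have h3 : ((N + 1) * (p i + auxS m p q i c0)) * (p i - auxS m p q i c0)
            = (N + 1) * (q i ^ 2 * c0) := by
          linear_combination (-(N + 1)) * hS2
        linarith [h2, h3]
      rw [← mul_div_assoc, div_le_iff₀ (hq2 i)]
      nlinarith [mul_le_mul_of_nonneg_left hprod (by positivity : (0:ℝ) ≤ 2 * (n i : ℝ))]
    have hsum : (2 * N + 1) * (∑ i, 2 * (n i : ℝ) * p i * (p i - auxS m p q i c0) / q i ^ 2)
        ≤ N * (2 * (N + 1) * c0) := by
      rw [Finset.mul_sum]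
      calc ∑ i, (2 * N + 1) * (2 * (n i : ℝ) * p i * (p i - auxS m p q i c0) / q i ^ 2)
          ≤ ∑ i, (n i : ℝ) * (2 * (N + 1) * c0) :=
            Finset.sum_le_sum (fun i _ => hkey i)
        _ = N * (2 * (N + 1) * c0) := by rw [← Finset.sum_mul, ← hN]
    unfold auxPhi
    rw [← hN]
    nlinarith [hsum, hNpos, hc0pos, hN1, mul_pos hNpos hc0pos,
      (by linarith : (0:ℝ) < 2 * N + 1)]
  have hcont : Continuous (auxPhi m n p q) := by
    unfold auxPhi auxS
    apply Continuous.sub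
    · apply continuous_finset_sum
      intro i _
      apply Continuous.div_const
      apply Continuous.mul
      · exact continuous_const
      · exact Continuous.sub continuous_const
          (Real.continuous_sqrt.comp (by continuity))
    · exact continuous_const.mul continuous_id
  have hIVT := intermediate_value_Icc hc0le hcont.continuousOn
  have h0mem : (0:ℝ) ∈ Set.Icc (auxPhi m n p q c0) (auxPhi m n p q cmax) :=
    ⟨le_of_lt hphic0, hphimax⟩
  obtain ⟨c, hcmem, hceq⟩ := hIVT h0mem
  refine ⟨c, lt_of_lt_of_le hc0pos hcmem.1, fun i => ?_, hceq⟩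
  exact le_trans (mul_le_mul_of_nonneg_left hcmem.2 (le_of_lt (hq2 i))) (hcmax_le i)

/-- From a root of φ we build a positive solution of F = 0. -/
lemma build_sol (m : ℕ) (n : Fin m → ℕ) (p q : Fin m → ℝ)
    (hn : ∀ i, 0 < n i) (hp : ∀ i, 0 < p i) (hq : ∀ i, q i ≠ 0)
    (c : ℝ) (hc : 0 < c) (hcle : ∀ i, q i ^ 2 * c ≤ p i ^ 2)
    (hphi : auxPhi m n p q c = 0) :
    (∀ i, 0 < (p i - auxS m p q i c) / q i ^ 2)
      ∧ ∀ i, flowF m n p q i (fun i => (p i - auxS m p q i c) / q i ^ 2) = 0 := by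
  have hq2 := auxq2 q hq
  set ξ : Fin m → ℝ := fun i => (p i - auxS m p q i c) / q i ^ 2 with hxi
  have hS0 : ∀ i, 0 ≤ auxS m p q i c := fun i => Real.sqrt_nonneg _
  have hS2 : ∀ i, (auxS m p q i c) ^ 2 = p i ^ 2 - q i ^ 2 * c :=
    fun i => Real.sq_sqrt (by linarith [hcle i])
  have hSlt : ∀ i, auxS m p q i c < p i := by
    intro i
    nlinarith [hS2 i, hS0 i, hp i, mul_pos (hq2 i) hc]
  have hpos : ∀ i, 0 < ξ i := fun i => div_pos (by linarith [hSlt i]) (hq2 i)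
  have hx : ∀ i, q i ^ 2 * ξ i = p i - auxS m p q i c := by
    intro i
    simp only [hxi]
    rw [mul_comm (q i ^ 2)]
    exact div_mul_cancel₀ _ (ne_of_gt (hq2 i))
  have hquad : ∀ i, q i ^ 2 * ξ i ^ 2 = 2 * p i * ξ i - c := by
    intro i
    have h2 : q i ^ 2 * (q i ^ 2 * ξ i ^ 2) = q i ^ 2 * (2 * p i * ξ i - c) := by
      linear_combination (q i ^ 2 * ξ i + p i - auxS m p q i c - 2 * p i) * hx i + hS2 i
    exact mul_left_cancel₀ (ne_of_gt (hq2 i)) h2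
  have hE : flowE m n q ξ = c := by
    unfold flowE
    have h7 : ∀ i ∈ Finset.univ, (n i : ℝ) * q i ^ 2 * ξ i ^ 2
        = 2 * (n i : ℝ) * p i * ξ i - (n i : ℝ) * c := by
      intro i _
      linear_combination (n i : ℝ) * hquad i
    rw [Finset.sum_congr rfl h7, Finset.sum_sub_distrib, ← Finset.sum_mul]
    have h8 : ∀ i ∈ Finset.univ, 2 * (n i : ℝ) * p i * (p i - auxS m p q i c) / q i ^ 2
        = 2 * (n i : ℝ) * p i * ξ i := by
      intro i _
      simp only [hxi]
      ring
    unfold auxPhi at hphi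
    rw [Finset.sum_congr rfl h8] at hphi
    linarith [hphi]
  have hF : ∀ i, flowF m n p q i ξ = 0 := by
    intro i
    unfold flowF
    rw [hE]
    linarith [hquad i]
  exact ⟨hpos, hF⟩

theorem stmt3 (m : ℕ) (n : Fin m → ℕ) (p q : Fin m → ℝ)
    (hn : ∀ i, 0 < n i) (hp : ∀ i, 0 < p i) (hq : ∀ i, q i ≠ 0) :
    ∃! ξ : Fin m → ℝ, (∀ i, 0 < ξ i) ∧ ∀ i, flowF m n p q i ξ = 0 := by
  rcases Nat.eq_zero_or_pos m with hm | hm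
  · subst hm
    refine ⟨fun _ => 1, ⟨fun i => i.elim0, fun i => i.elim0⟩, fun y _ => ?_⟩
    funext i
    exact i.elim0
  · obtain ⟨c, hc, hcle, hphi⟩ := phi_exists_root m n p q hm hn hp hq
    obtain ⟨hpos, hF⟩ := build_sol m n p q hn hp hq c hc hcle hphi
    refine ⟨fun i => (p i - auxS m p q i c) / q i ^ 2, ⟨hpos, hF⟩, ?_⟩
    rintro Z ⟨hZpos, hZF⟩
    obtain ⟨hcZ, hZdisc, hZform, hZphi⟩ := sol_char m n p q hm hn hp hq Z hZpos hZF
    set d := flowE m n q Z with hd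
    have hdc : d = c := by
      rcases lt_trichotomy d c with h | h | h
      · exfalso
        have hlt := phi_lt m n p q hm hn hp hq hcZ h hcle
        rw [hphi, mul_zero] at hlt
        rw [hZphi] at hlt
        exact lt_irrefl 0 hlt
      · exact h
      · exfalso
        have hlt := phi_lt m n p q hm hn hp hq hc h hZdisc
        rw [hZphi, mul_zero] at hlt
        rw [hphi] at hlt
        exact lt_irrefl 0 hlt
    funext i
    rw [hZform i, hdc]
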